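/- Let L(x) = 2^{-3/2} e^{-x/√2} ( cos(x/√2) + sin(x/√2) ) for x ≥ 0, the equivalent kernel for smoothing splines with m = 2. Then L(|·|) is a fourth-order kernel: ∫_ℝ L(|t|) dt = 1 and ∫_ℝ t² L(|t|) dt = 0. -/

import Mathlib

open MeasureTheory

noncomputable section

/-- The equivalent kernel for smoothing splines with `m = 2`:
`L(x) = 2^{-3/2} e^{-x/√2} (cos(x/√2) + sin(x/√2))`. -/
def L2ker (x : ℝ) : ℝ :=
  (2 * Real.sqrt 2)⁻¹ * Real.exp (-x / Real.sqrt 2) *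
    (Real.cos (x / Real.sqrt 2) + Real.sin (x / Real.sqrt 2))

namespace L2kerAux

open Real Filter Topology Set

lemma r2_pos : (0:ℝ) < Real.sqrt 2 := Real.sqrt_pos.mpr (by norm_num)

lemma r2_ne : Real.sqrt 2 ≠ 0 := r2_pos.ne'

lemma r2_sq : Real.sqrt 2 * Real.sqrt 2 = 2 := Real.mul_self_sqrt (by norm_num)

lemma r2_inv : (Real.sqrt 2)⁻¹ = Real.sqrt 2 / 2 := by
  rw [eq_div_iff (by norm_num : (2:ℝ) ≠ 0), inv_mul_eq_div, div_eq_iff r2_ne, r2_sq]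

lemma hd (x : ℝ) : HasDerivAt (fun x : ℝ => x / Real.sqrt 2) (1 / Real.sqrt 2) x :=
  (hasDerivAt_id x).div_const _

lemma hneg (x : ℝ) : HasDerivAt (fun x : ℝ => -x / Real.sqrt 2) (-(1 / Real.sqrt 2)) x := by
  simpa [neg_div, Pi.neg_def] using (hd x).neg

lemma hcont : Continuous L2ker := by
  unfold L2ker
  fun_prop

/-- exponential decay beats polynomials -/
lemma tendsto_pow_exp (n : ℕ) :
    Tendsto (fun x : ℝ => x ^ n * Real.exp (-x / Real.sqrt 2)) atTop (𝓝 0) := by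
  have h := tendsto_rpow_mul_exp_neg_mul_atTop_nhds_zero n (Real.sqrt 2)⁻¹ (by positivity)
  refine h.congr' ?_
  filter_upwards [eventually_gt_atTop 0] with x hx
  rw [Real.rpow_natCast]
  congr 1
  field_simp

lemma hasDerivAt_F1 (x : ℝ) :
    HasDerivAt (fun x : ℝ => -(2:ℝ)⁻¹ * (Real.exp (-x / Real.sqrt 2) * Real.cos (x / Real.sqrt 2)))
      (L2ker x) x := by
  have h := ((hneg x).exp.mul ((hd x).cos)).const_mul (-(2:ℝ)⁻¹)
  refine h.congr_deriv (Eq.symm ?_)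
  unfold L2ker
  rw [one_div, mul_inv, r2_inv]
  ring

lemma hasDerivAt_F2 (x : ℝ) :
    HasDerivAt (fun x : ℝ => (2 * Real.sqrt 2)⁻¹ *
      -(Real.exp (-x / Real.sqrt 2) *
        ((Real.sqrt 2 / 2 * x ^ 2 - Real.sqrt 2) *
            (Real.cos (x / Real.sqrt 2) + Real.sin (x / Real.sqrt 2)) +
          (Real.sqrt 2 / 2 * x ^ 2 + 2 * x + Real.sqrt 2) *
            (Real.cos (x / Real.sqrt 2) - Real.sin (x / Real.sqrt 2)))))
      (x ^ 2 * L2ker x) x := by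
  have hA : HasDerivAt (fun x : ℝ => Real.sqrt 2 / 2 * x ^ 2 - Real.sqrt 2)
      (Real.sqrt 2 / 2 * ((2:ℕ) * x ^ 1)) x :=
    ((hasDerivAt_pow 2 x).const_mul _).sub_const _
  have hB : HasDerivAt (fun x : ℝ => Real.sqrt 2 / 2 * x ^ 2 + 2 * x + Real.sqrt 2)
      (Real.sqrt 2 / 2 * ((2:ℕ) * x ^ 1) + 2 * 1) x :=
    (((hasDerivAt_pow 2 x).const_mul _).add ((hasDerivAt_id x).const_mul 2)).add_const _
  have hcs := ((hd x).cos).add ((hd x).sin)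
  have hcms := ((hd x).cos).sub ((hd x).sin)
  have h := (((hneg x).exp.mul ((hA.mul hcs).add (hB.mul hcms))).neg).const_mul
    ((2 * Real.sqrt 2)⁻¹)
  refine h.congr_deriv (Eq.symm ?_)
  unfold L2ker
  rw [one_div, mul_inv, r2_inv]
  simp only [Pi.add_apply, Pi.sub_apply, Pi.mul_apply]
  push_cast
  linear_combination (-(Real.exp (-x / Real.sqrt 2) *
      (Real.cos (x / Real.sqrt 2) + Real.sin (x / Real.sqrt 2)) * x ^ 2 * Real.sqrt 2 / 8) -
    Real.exp (-x / Real.sqrt 2) *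
      (Real.cos (x / Real.sqrt 2) - Real.sin (x / Real.sqrt 2)) * Real.sqrt 2 / 4) * r2_sq

lemma abs_cs_le (y : ℝ) : |Real.cos y + Real.sin y| ≤ 2 := by
  calc |Real.cos y + Real.sin y| ≤ |Real.cos y| + |Real.sin y| := abs_add_le _ _
    _ ≤ 1 + 1 := add_le_add (Real.abs_cos_le_one y) (Real.abs_sin_le_one y)
    _ = 2 := by norm_num

lemma abs_cms_le (y : ℝ) : |Real.cos y - Real.sin y| ≤ 2 := by
  calc |Real.cos y - Real.sin y| ≤ |Real.cos y| + |Real.sin y| := abs_sub _ _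
    _ ≤ 1 + 1 := add_le_add (Real.abs_cos_le_one y) (Real.abs_sin_le_one y)
    _ = 2 := by norm_num

lemma int1 : IntegrableOn L2ker (Ioi (0:ℝ)) := by
  refine Integrable.mono'
    ((exp_neg_integrableOn_Ioi 0 (show (0:ℝ) < (Real.sqrt 2)⁻¹ by positivity)).const_mul
      ((Real.sqrt 2)⁻¹)) hcont.aestronglyMeasurable.restrict ?_
  refine Eventually.of_forall fun x => ?_
  have hE := Real.exp_pos (-x / Real.sqrt 2)
  calc ‖L2ker x‖
      = (2 * Real.sqrt 2)⁻¹ * Real.exp (-x / Real.sqrt 2) *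
          |Real.cos (x / Real.sqrt 2) + Real.sin (x / Real.sqrt 2)| := by
        unfold L2ker
        rw [Real.norm_eq_abs, abs_mul, abs_mul, Real.abs_exp,
          abs_of_pos (show (0:ℝ) < (2 * Real.sqrt 2)⁻¹ by positivity)]
    _ ≤ (2 * Real.sqrt 2)⁻¹ * Real.exp (-x / Real.sqrt 2) * 2 := by
        gcongr
        exact abs_cs_le _
    _ = (Real.sqrt 2)⁻¹ * Real.exp (-(Real.sqrt 2)⁻¹ * x) := by
        rw [show -(Real.sqrt 2)⁻¹ * x = -x / Real.sqrt 2 by ring, mul_inv]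
        ring

lemma int2 : IntegrableOn (fun x : ℝ => x ^ 2 * L2ker x) (Ioi (0:ℝ)) := by
  have hbase : IntegrableOn (fun x : ℝ => x ^ 2 * Real.exp (-(Real.sqrt 2)⁻¹ * x)) (Ioi 0) := by
    have h := integrableOn_rpow_mul_exp_neg_mul_rpow (p := 1) (s := 2) (b := (Real.sqrt 2)⁻¹)
      (by norm_num) zero_lt_one (by positivity)
    refine h.congr_fun (fun x _ => ?_) measurableSet_Ioi
    dsimp only
    rw [Real.rpow_one, show ((2:ℝ)) = ((2:ℕ):ℝ) by norm_num, Real.rpow_natCast]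
  refine Integrable.mono' (hbase.const_mul ((Real.sqrt 2)⁻¹))
    (((continuous_pow 2).mul hcont).aestronglyMeasurable.restrict) ?_
  refine Eventually.of_forall fun x => ?_
  have hE := Real.exp_pos (-x / Real.sqrt 2)
  calc ‖x ^ 2 * L2ker x‖
      = x ^ 2 * ((2 * Real.sqrt 2)⁻¹ * Real.exp (-x / Real.sqrt 2) *
          |Real.cos (x / Real.sqrt 2) + Real.sin (x / Real.sqrt 2)|) := by
        unfold L2ker
        rw [Real.norm_eq_abs, abs_mul, abs_mul, abs_mul, Real.abs_exp, abs_pow, sq_abs,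
          abs_of_pos (show (0:ℝ) < (2 * Real.sqrt 2)⁻¹ by positivity)]
    _ ≤ x ^ 2 * ((2 * Real.sqrt 2)⁻¹ * Real.exp (-x / Real.sqrt 2) * 2) := by
        gcongr
        exact abs_cs_le _
    _ = (Real.sqrt 2)⁻¹ * (x ^ 2 * Real.exp (-(Real.sqrt 2)⁻¹ * x)) := by
        rw [show -(Real.sqrt 2)⁻¹ * x = -x / Real.sqrt 2 by ring, mul_inv]
        ring

lemma tendsto_F1 :
    Tendsto (fun x : ℝ => -(2:ℝ)⁻¹ * (Real.exp (-x / Real.sqrt 2) * Real.cos (x / Real.sqrt 2)))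
      atTop (𝓝 0) := by
  have hg : Tendsto (fun x : ℝ => (2:ℝ)⁻¹ * (x ^ 0 * Real.exp (-x / Real.sqrt 2)))
      atTop (𝓝 0) := by
    simpa using (tendsto_pow_exp 0).const_mul ((2:ℝ)⁻¹)
  refine squeeze_zero_norm (fun x => ?_) hg
  have hE := Real.exp_pos (-x / Real.sqrt 2)
  calc ‖-(2:ℝ)⁻¹ * (Real.exp (-x / Real.sqrt 2) * Real.cos (x / Real.sqrt 2))‖
      = (2:ℝ)⁻¹ * (Real.exp (-x / Real.sqrt 2) * |Real.cos (x / Real.sqrt 2)|) := by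
        rw [Real.norm_eq_abs, abs_mul, abs_mul, abs_neg, Real.abs_exp]
        norm_num
    _ ≤ (2:ℝ)⁻¹ * (Real.exp (-x / Real.sqrt 2) * 1) := by
        gcongr
        exact Real.abs_cos_le_one _
    _ = (2:ℝ)⁻¹ * (x ^ 0 * Real.exp (-x / Real.sqrt 2)) := by ring

lemma tendsto_F2 :
    Tendsto (fun x : ℝ => (2 * Real.sqrt 2)⁻¹ *
      -(Real.exp (-x / Real.sqrt 2) *
        ((Real.sqrt 2 / 2 * x ^ 2 - Real.sqrt 2) *
            (Real.cos (x / Real.sqrt 2) + Real.sin (x / Real.sqrt 2)) +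
          (Real.sqrt 2 / 2 * x ^ 2 + 2 * x + Real.sqrt 2) *
            (Real.cos (x / Real.sqrt 2) - Real.sin (x / Real.sqrt 2)))))
      atTop (𝓝 0) := by
  have hg : Tendsto (fun x : ℝ => 2 * (x ^ 2 * Real.exp (-x / Real.sqrt 2)) +
      (2 * (x ^ 1 * Real.exp (-x / Real.sqrt 2)) + 2 * (x ^ 0 * Real.exp (-x / Real.sqrt 2))))
      atTop (𝓝 0) := by
    simpa using ((tendsto_pow_exp 2).const_mul (2:ℝ)).add
      (((tendsto_pow_exp 1).const_mul (2:ℝ)).add ((tendsto_pow_exp 0).const_mul (2:ℝ)))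
  refine squeeze_zero_norm' ?_ hg
  filter_upwards [eventually_ge_atTop (0:ℝ)] with x hx
  have hE := Real.exp_pos (-x / Real.sqrt 2)
  have hr1 : (1:ℝ) ≤ Real.sqrt 2 := by nlinarith [r2_sq, r2_pos]
  have hr2 : Real.sqrt 2 ≤ 2 := by nlinarith [r2_sq, r2_pos]
  have hA : |Real.sqrt 2 / 2 * x ^ 2 - Real.sqrt 2| ≤ Real.sqrt 2 / 2 * x ^ 2 + Real.sqrt 2 := by
    rw [abs_le]
    constructor <;> nlinarith [sq_nonneg x, r2_pos]
  have hB : |Real.sqrt 2 / 2 * x ^ 2 + 2 * x + Real.sqrt 2| ≤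
      Real.sqrt 2 / 2 * x ^ 2 + 2 * x + Real.sqrt 2 := by
    rw [abs_le]
    constructor <;> nlinarith [sq_nonneg x, r2_pos]
  have hsum : |(Real.sqrt 2 / 2 * x ^ 2 - Real.sqrt 2) *
        (Real.cos (x / Real.sqrt 2) + Real.sin (x / Real.sqrt 2)) +
      (Real.sqrt 2 / 2 * x ^ 2 + 2 * x + Real.sqrt 2) *
        (Real.cos (x / Real.sqrt 2) - Real.sin (x / Real.sqrt 2))| ≤
      (Real.sqrt 2 / 2 * x ^ 2 + Real.sqrt 2) * 2 +
      (Real.sqrt 2 / 2 * x ^ 2 + 2 * x + Real.sqrt 2) * 2 := by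
    calc |(Real.sqrt 2 / 2 * x ^ 2 - Real.sqrt 2) *
          (Real.cos (x / Real.sqrt 2) + Real.sin (x / Real.sqrt 2)) +
        (Real.sqrt 2 / 2 * x ^ 2 + 2 * x + Real.sqrt 2) *
          (Real.cos (x / Real.sqrt 2) - Real.sin (x / Real.sqrt 2))|
        ≤ |(Real.sqrt 2 / 2 * x ^ 2 - Real.sqrt 2) *
            (Real.cos (x / Real.sqrt 2) + Real.sin (x / Real.sqrt 2))| +
          |(Real.sqrt 2 / 2 * x ^ 2 + 2 * x + Real.sqrt 2) *
            (Real.cos (x / Real.sqrt 2) - Real.sin (x / Real.sqrt 2))| := abs_add_le _ _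
      _ = |Real.sqrt 2 / 2 * x ^ 2 - Real.sqrt 2| *
            |Real.cos (x / Real.sqrt 2) + Real.sin (x / Real.sqrt 2)| +
          |Real.sqrt 2 / 2 * x ^ 2 + 2 * x + Real.sqrt 2| *
            |Real.cos (x / Real.sqrt 2) - Real.sin (x / Real.sqrt 2)| := by
          rw [abs_mul, abs_mul]
      _ ≤ (Real.sqrt 2 / 2 * x ^ 2 + Real.sqrt 2) * 2 +
          (Real.sqrt 2 / 2 * x ^ 2 + 2 * x + Real.sqrt 2) * 2 := by
          gcongr <;> first
            | exact abs_cs_le _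
            | exact abs_cms_le _
  calc ‖(2 * Real.sqrt 2)⁻¹ *
      -(Real.exp (-x / Real.sqrt 2) *
        ((Real.sqrt 2 / 2 * x ^ 2 - Real.sqrt 2) *
            (Real.cos (x / Real.sqrt 2) + Real.sin (x / Real.sqrt 2)) +
          (Real.sqrt 2 / 2 * x ^ 2 + 2 * x + Real.sqrt 2) *
            (Real.cos (x / Real.sqrt 2) - Real.sin (x / Real.sqrt 2))))‖
      = (2 * Real.sqrt 2)⁻¹ * (Real.exp (-x / Real.sqrt 2) *
          |(Real.sqrt 2 / 2 * x ^ 2 - Real.sqrt 2) *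
              (Real.cos (x / Real.sqrt 2) + Real.sin (x / Real.sqrt 2)) +
            (Real.sqrt 2 / 2 * x ^ 2 + 2 * x + Real.sqrt 2) *
              (Real.cos (x / Real.sqrt 2) - Real.sin (x / Real.sqrt 2))|) := by
        rw [Real.norm_eq_abs, abs_mul, abs_neg, abs_mul, Real.abs_exp,
          abs_of_pos (show (0:ℝ) < (2 * Real.sqrt 2)⁻¹ by positivity)]
    _ ≤ (2 * Real.sqrt 2)⁻¹ * (Real.exp (-x / Real.sqrt 2) *
          ((Real.sqrt 2 / 2 * x ^ 2 + Real.sqrt 2) * 2 +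
            (Real.sqrt 2 / 2 * x ^ 2 + 2 * x + Real.sqrt 2) * 2)) := by
        gcongr
    _ = Real.exp (-x / Real.sqrt 2) * (x ^ 2 + Real.sqrt 2 * x + 2) := by
        rw [mul_inv, r2_inv]
        linear_combination (Real.exp (-x / Real.sqrt 2) * (x ^ 2 / 2 + 1)) * r2_sq
    _ ≤ 2 * (x ^ 2 * Real.exp (-x / Real.sqrt 2)) +
          (2 * (x ^ 1 * Real.exp (-x / Real.sqrt 2)) +
            2 * (x ^ 0 * Real.exp (-x / Real.sqrt 2))) := by
        nlinarith [mul_nonneg (pow_nonneg hx 2) hE.le,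
          mul_nonneg (mul_nonneg (sub_nonneg.2 hr2) hx) hE.le]

lemma key1 : ∫ x in Ioi (0:ℝ), L2ker x = 1 / 2 := by
  have h := integral_Ioi_of_hasDerivAt_of_tendsto' (m := 0)
    (fun x _ => hasDerivAt_F1 x) int1 tendsto_F1
  rw [h]
  norm_num

lemma key2 : ∫ x in Ioi (0:ℝ), x ^ 2 * L2ker x = 0 := by
  have h := integral_Ioi_of_hasDerivAt_of_tendsto' (m := 0)
    (fun x _ => hasDerivAt_F2 x) int2 tendsto_F2
  rw [h]
  norm_num

end L2kerAux

/-- `L(|·|)` is a fourth-order kernel: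
`∫ℝ L(|t|) dt = 1` and `∫ℝ t² L(|t|) dt = 0`. -/
theorem L2ker_fourth_order_kernel :
    (∫ t : ℝ, L2ker |t|) = 1 ∧ (∫ t : ℝ, t ^ 2 * L2ker |t|) = 0 := by
  constructor
  · rw [integral_comp_abs (f := L2ker), L2kerAux.key1]
    norm_num
  · have h : ∀ t : ℝ, t ^ 2 * L2ker |t| = |t| ^ 2 * L2ker |t| := fun t => by rw [sq_abs]
    simp_rw [h]
    rw [integral_comp_abs (f := fun x => x ^ 2 * L2ker x), L2kerAux.key2]
    norm_num
end
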